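/- Let G be a weighted graph with sup_x Deg(x) ≤ D and |Δ^k a(x)| ≤ A₃·(2D)^k·exp(A₄·(k + d(x,p))·ln(k + d(x,p))) with 0 < A₄ < 1. Then for δ < 1/(2De) and any ε > 0 with A₄(1+2ε) < 1, the function v(x,t) = Σ_{k≥0} Δ^k a(x)·t^k/k! satisfies a growth bound |v(x,t)| ≤ Ã₃·exp(Ã₄·d(x,p)·ln d(x,p)) on V × (−δ, 0] for some constant Ã₃ > 0 and Ã₄ = A₄(1+2ε) < 1. -/

import Mathlib

open Real Filter

/-- A weighted graph: symmetric nonnegative edge weights, positive vertex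
weights, locally finite. -/
structure WeightedGraph (V : Type*) where
  ω : V → V → ℝ
  μ : V → ℝ
  symm : ∀ x y, ω x y = ω y x
  nonneg : ∀ x y, 0 ≤ ω x y
  loopless : ∀ x, ω x x = 0
  μ_pos : ∀ x, 0 < μ x
  locFin : ∀ x, (Function.support (ω x)).Finite

namespace WeightedGraph

variable {V : Type*}

/-- The graph Laplacian Δf(x) = Σ_y (ω_{xy}/μ_x)(f(y) - f(x)). -/
noncomputable def lap (G : WeightedGraph V) (f : V → ℝ) (x : V) : ℝ :=
  ∑' y, (G.ω x y / G.μ x) * (f y - f x)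

/-- The weighted degree Deg(x) = Σ_y ω_{xy}/μ_x. -/
noncomputable def deg (G : WeightedGraph V) (x : V) : ℝ :=
  ∑' y, G.ω x y / G.μ x

/-- The underlying simple graph: x ~ y iff ω_{xy} ≠ 0. -/
def adj (G : WeightedGraph V) : SimpleGraph V :=
  SimpleGraph.fromRel (fun x y => G.ω x y ≠ 0)

/-- The combinatorial graph distance. -/
noncomputable def dist (G : WeightedGraph V) (x y : V) : ℕ := G.adj.dist x y

/-- Iterated Laplacian Δ^k. -/
noncomputable def lapIter (G : WeightedGraph V) : ℕ → (V → ℝ) → (V → ℝ)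
  | 0, f => f
  | (k+1), f => G.lap (G.lapIter k f)

end WeightedGraph

lemma absorb_aux (c b : ℝ) (hc : 0 ≤ c) (hb : 0 < b) (n : ℕ) :
    c * n ≤ b * (n : ℝ) * Real.log n + c * Real.exp (c / b) := by
  rcases Nat.eq_zero_or_pos n with h | h
  · simp [h]; positivity
  · have h1 : (1 : ℝ) ≤ n := by exact_mod_cast h
    have hlog : 0 ≤ Real.log n := Real.log_nonneg h1
    rcases le_or_gt (c / b) (Real.log n) with hcase | hcase
    · have : c / b * (b * n) ≤ Real.log n * (b * n) := by
        apply mul_le_mul_of_nonneg_right hcase; positivity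
      have hcb : c / b * (b * n) = c * n := by field_simp
      have hexp : 0 ≤ c * Real.exp (c / b) := by positivity
      nlinarith [hexp]
    · have : (n : ℝ) ≤ Real.exp (c / b) := by
        calc (n : ℝ) = Real.exp (Real.log n) := (Real.exp_log (by linarith)).symm
        _ ≤ Real.exp (c / b) := Real.exp_le_exp.mpr hcase.le
      have h2 : c * n ≤ c * Real.exp (c / b) := mul_le_mul_of_nonneg_left this hc
      have h3 : 0 ≤ b * (n : ℝ) * Real.log n := by positivity
      linarith

lemma entropy_aux (a b : ℝ) (ha : 0 ≤ a) (hb : 0 ≤ b) :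
    (a + b) * Real.log (a + b) ≤ a * Real.log a + b * Real.log b + (a + b) := by
  rcases eq_or_lt_of_le ha with h | ha'
  · simp [← h]; nlinarith [hb]
  rcases eq_or_lt_of_le hb with h | hb'
  · simp [← h]; nlinarith [ha]
  have hab : 0 < a + b := by linarith
  have k1 : Real.log (a + b) - Real.log a ≤ (a+b)/a - 1 := by
    rw [← Real.log_div hab.ne' ha'.ne']
    exact Real.log_le_sub_one_of_pos (by positivity)
  have k2 : Real.log (a + b) - Real.log b ≤ (a+b)/b - 1 := by
    rw [← Real.log_div hab.ne' hb'.ne']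
    exact Real.log_le_sub_one_of_pos (by positivity)
  have m1 : a * (Real.log (a+b) - Real.log a) ≤ a * ((a+b)/a - 1) :=
    mul_le_mul_of_nonneg_left k1 ha
  have m2 : b * (Real.log (a+b) - Real.log b) ≤ b * ((a+b)/b - 1) :=
    mul_le_mul_of_nonneg_left k2 hb
  have e1 : a * ((a+b)/a - 1) = b := by field_simp; ring
  have e2 : b * ((a+b)/b - 1) = a := by field_simp; ring
  nlinarith [m1, m2]

lemma key_aux (A₄ ε : ℝ) (hA₄0 : 0 < A₄) (hA₄1 : A₄ < 1) (hε : 0 < ε) (k d : ℕ) :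
    A₄ * ((k:ℝ) + d) * Real.log ((k:ℝ) + d) ≤
      (k:ℝ) * Real.log k + A₄ * (1 + 2*ε) * d * Real.log d
        + (A₄ * Real.exp (A₄/(1-A₄)) + A₄ * Real.exp (1/(2*ε))) := by
  have E := entropy_aux (k:ℝ) (d:ℝ) (Nat.cast_nonneg k) (Nat.cast_nonneg d)
  have E' := mul_le_mul_of_nonneg_left E hA₄0.le
  have H1 := absorb_aux A₄ (1 - A₄) hA₄0.le (by linarith) k
  have H2 := absorb_aux A₄ (2*ε*A₄) hA₄0.le (by positivity) d
  have hrw : A₄ / (2*ε*A₄) = 1/(2*ε) := by field_simp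
  rw [hrw] at H2
  nlinarith [E', H1, H2]

lemma pow_fac_aux (k : ℕ) :
    Real.exp ((k:ℝ) * Real.log k) ≤ Real.exp k * (Nat.factorial k : ℝ) := by
  rcases Nat.eq_zero_or_pos k with h | h
  · simp [h]
  · have hk : (0:ℝ) < k := by exact_mod_cast h
    have heq : Real.exp ((k:ℝ) * Real.log k) = (k:ℝ) ^ k := by
      rw [Real.exp_nat_mul, Real.exp_log hk]
    rw [heq]
    have h2 : (k:ℝ) ^ k / (Nat.factorial k : ℝ) ≤ Real.exp k :=
      Real.pow_div_factorial_le_exp (k:ℝ) (Nat.cast_nonneg k) k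
    have hfac : (0:ℝ) < (Nat.factorial k : ℝ) := by exact_mod_cast k.factorial_pos
    rw [div_le_iff₀ hfac] at h2
    linarith

/-- growth bound for v(x,t) = Σ Δ^k a(x) t^k/k!. -/
theorem series_growth_bound {V : Type*} (G : WeightedGraph V)
    (hconn : G.adj.Connected) (p : V) (D A₃ A₄ δ ε : ℝ)
    (hD : ∀ x, G.deg x ≤ D) (hA₃ : 0 < A₃) (hA₄0 : 0 < A₄) (hA₄1 : A₄ < 1)
    (a : V → ℝ)
    (ha : ∀ (k : ℕ) (x : V), |G.lapIter k a x| ≤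
      A₃ * (2 * D) ^ k * Real.exp (A₄ * ((k : ℝ) + (G.dist x p : ℝ)) *
        Real.log ((k : ℝ) + (G.dist x p : ℝ))))
    (hδ0 : 0 < δ) (hδ : δ < 1 / (2 * D * Real.exp 1))
    (hε : 0 < ε) (hε' : A₄ * (1 + 2 * ε) < 1)
    (v : V → ℝ → ℝ)
    (hv : ∀ x t, v x t = ∑' k : ℕ, G.lapIter k a x * t ^ k / (Nat.factorial k : ℝ)) :
    ∃ A₃' : ℝ, 0 < A₃' ∧ ∀ x, ∀ t ∈ Set.Ioc (-δ) (0:ℝ),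
      |v x t| ≤ A₃' * Real.exp ((A₄ * (1 + 2 * ε)) * (G.dist x p : ℝ) *
        Real.log (G.dist x p : ℝ)) := by
  have he1 : (0:ℝ) < Real.exp 1 := Real.exp_pos 1
  have hDe : (0:ℝ) < 2 * D * Real.exp 1 := by
    by_contra h
    push_neg at h
    have h2 : 1 / (2 * D * Real.exp 1) ≤ 0 := one_div_nonpos.mpr h
    linarith
  have hD0 : 0 < D := by nlinarith
  have hq1' : δ * (2 * D * Real.exp 1) < 1 := (lt_div_iff₀ hDe).mp hδ
  set q : ℝ := 2 * D * δ * Real.exp 1 with hqdef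
  have hq0 : 0 ≤ q := by positivity
  have hqlt : q < 1 := by rw [hqdef]; nlinarith
  set C : ℝ := A₄ * Real.exp (A₄ / (1 - A₄)) + A₄ * Real.exp (1 / (2 * ε)) with hCdef
  have hCpos : 0 < Real.exp C := Real.exp_pos C
  have h1q : 0 < 1 - q := by linarith
  refine ⟨A₃ * Real.exp C / (1 - q), by positivity, ?_⟩
  intro x t ht
  obtain ⟨ht1, ht2⟩ := ht
  have hts : |t| ≤ δ := abs_le.mpr ⟨by linarith, by linarith⟩
  set dd : ℕ := G.dist x p with hdd
  set E : ℝ := Real.exp ((A₄ * (1 + 2 * ε)) * (dd : ℝ) * Real.log (dd : ℝ)) with hEdef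
  have hEpos : 0 < E := Real.exp_pos _
  have hterm : ∀ k : ℕ, |G.lapIter k a x * t ^ k / (Nat.factorial k : ℝ)| ≤
      (A₃ * Real.exp C * E) * q ^ k := by
    intro k
    have hfac : (0:ℝ) < (Nat.factorial k : ℝ) := by exact_mod_cast k.factorial_pos
    rw [abs_div, abs_mul, abs_pow, abs_of_pos hfac]
    have h2 : Real.exp (A₄ * ((k:ℝ) + (dd:ℝ)) * Real.log ((k:ℝ) + (dd:ℝ))) ≤
        Real.exp ((k:ℝ) * Real.log k) * (E * Real.exp C) := by
      rw [hEdef, ← Real.exp_add, ← Real.exp_add]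
      apply Real.exp_le_exp.mpr
      have := key_aux A₄ ε hA₄0 hA₄1 hε k dd
      rw [hCdef]
      nlinarith [this]
    have habs : |G.lapIter k a x| ≤ A₃ * (2*D)^k *
        (Real.exp ((k:ℝ) * Real.log k) * (E * Real.exp C)) := by
      refine (ha k x).trans ?_
      rw [← hdd]
      exact mul_le_mul_of_nonneg_left h2 (by positivity)
    have hpow : |t| ^ k ≤ δ ^ k := pow_le_pow_left₀ (abs_nonneg t) hts k
    have hqk : q ^ k = (2*D)^k * δ^k * Real.exp (k:ℝ) := by
      have hek : Real.exp ((k:ℝ)) = Real.exp 1 ^ k := by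
        rw [← Real.exp_nat_mul]; norm_num
      rw [hqdef, hek]; ring
    calc |G.lapIter k a x| * |t| ^ k / (Nat.factorial k : ℝ)
        ≤ (A₃ * (2*D)^k * (Real.exp ((k:ℝ) * Real.log k) * (E * Real.exp C))) * δ ^ k
            / (Nat.factorial k : ℝ) := by
          gcongr
      _ ≤ (A₃ * (2*D)^k * ((Real.exp (k:ℝ) * (Nat.factorial k : ℝ)) * (E * Real.exp C))) * δ ^ k
            / (Nat.factorial k : ℝ) := by
          gcongr
          exact pow_fac_aux k
      _ = (A₃ * Real.exp C * E) * q ^ k := by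
          rw [hqk]; field_simp
  have hgs : Summable (fun k : ℕ => (A₃ * Real.exp C * E) * q ^ k) :=
    (summable_geometric_of_lt_one hq0 hqlt).mul_left _
  have hfs : Summable (fun k : ℕ => G.lapIter k a x * t ^ k / (Nat.factorial k : ℝ)) := by
    apply Summable.of_norm_bounded hgs
    intro k
    rw [Real.norm_eq_abs]
    exact hterm k
  rw [hv]
  have h0 : |∑' k : ℕ, G.lapIter k a x * t ^ k / (Nat.factorial k : ℝ)| ≤
      ∑' k : ℕ, |G.lapIter k a x * t ^ k / (Nat.factorial k : ℝ)| := by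
    have := norm_tsum_le_tsum_norm
        (f := fun k : ℕ => G.lapIter k a x * t ^ k / (Nat.factorial k : ℝ))
        (by simpa only [Real.norm_eq_abs] using hfs.abs)
    simpa only [Real.norm_eq_abs] using this
  refine h0.trans ?_
  have h1 : (∑' k : ℕ, |G.lapIter k a x * t ^ k / (Nat.factorial k : ℝ)|) ≤
      ∑' k : ℕ, (A₃ * Real.exp C * E) * q ^ k :=
    Summable.tsum_le_tsum hterm hfs.abs hgs
  refine h1.trans ?_
  rw [tsum_mul_left, tsum_geometric_of_lt_one hq0 hqlt]
  apply le_of_eq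
  rw [div_eq_mul_inv]
  ring
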